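/- Let R be a commutative Noetherian ring and M a finitely generated R-module such that the trace ideal τ(M) contains a nonzerodivisor of R. Then End_R(τ(Hom_R(M,R))) ≅ End_R(τ(M)) ≅ Z(End_R(Hom_R(M,R))) as R-algebras, where Z denotes the center. -/

import Mathlib

universe u v

/-- The trace ideal of a module: the ideal generated by all images of maps `M →ₗ[R] R`. -/
def traceIdeal (R : Type u) (M : Type v) [CommRing R] [AddCommGroup M] [Module R M] :
    Ideal R :=
  ⨆ f : M →ₗ[R] R, LinearMap.range f

open scoped nonZeroDivisors

set_option maxHeartbeats 1000000
set_option synthInstance.maxHeartbeats 400000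

namespace TraceAux

variable {R : Type u} [CommRing R]

local notation "K" => FractionRing R
local notation "ι" => algebraMap R (FractionRing R)

lemma injι : Function.Injective (ι) := IsFractionRing.injective R K

lemma isUnitι {r : R} (hr : r ∈ R⁰) : IsUnit (ι r) :=
  IsLocalization.map_units _ ⟨r, hr⟩

lemma cancelι {r : R} (hr : r ∈ R⁰) {a b : K} (h : ι r * a = ι r * b) : a = b :=
  (isUnitι hr).mul_left_cancel h

/-- The "idealizer" `(I : I)` of an ideal inside the total quotient ring, as a subalgebra. -/
def idl (I : Ideal R) : Subalgebra R (FractionRing R) where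
  carrier := {q | ∀ x ∈ I, ∃ y ∈ I, q * ι x = ι y}
  mul_mem' := by
    intro a b ha hb x hx
    obtain ⟨y, hy, e⟩ := hb x hx
    obtain ⟨z, hz, e'⟩ := ha y hy
    exact ⟨z, hz, by rw [mul_assoc, e, e']⟩
  one_mem' := fun x hx => ⟨x, hx, one_mul _⟩
  add_mem' := by
    intro a b ha hb x hx
    obtain ⟨y, hy, e⟩ := ha x hx
    obtain ⟨z, hz, e'⟩ := hb x hx
    exact ⟨y + z, add_mem hy hz, by rw [add_mul, e, e', map_add]⟩
  algebraMap_mem' := fun a x hx => ⟨a * x, I.mul_mem_left a hx, (map_mul _ _ _).symm⟩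

lemma mem_idl_iff {I : Ideal R} {q : K} :
    q ∈ idl I ↔ ∀ x ∈ I, ∃ y ∈ I, q * ι x = ι y := Iff.rfl

section EndEquiv

variable (I : Ideal R) {r : R}

/-- The defining property of the fraction associated to an endomorphism of `I`. -/
def Espec (φ : Module.End R I) (q : K) : Prop :=
  ∀ x : I, q * ι (x : R) = ι (φ x : R)

lemma espec_unique (hrI : r ∈ I) (hr : r ∈ R⁰) {φ : Module.End R I} {q q' : K}
    (h1 : Espec I φ q) (h2 : Espec I φ q') : q = q' := by
  apply cancelι hr
  rw [mul_comm _ q, mul_comm _ q', h1 ⟨r, hrI⟩, h2 ⟨r, hrI⟩]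

lemma key_comm (φ : Module.End R I) (hrI : r ∈ I) (x : I) :
    (x : R) * (φ ⟨r, hrI⟩ : R) = r * (φ x : R) := by
  have h1 : (x : R) • (⟨r, hrI⟩ : I) = r • x := by
    apply Subtype.ext
    simp [mul_comm]
  have h2 := congrArg (fun z => φ z) h1
  simp only [map_smul] at h2
  have := congrArg (Subtype.val) h2
  simpa using this

lemma espec_exists (hrI : r ∈ I) (hr : r ∈ R⁰) (φ : Module.End R I) :
    ∃ q : K, Espec I φ q := by
  refine ⟨↑(isUnitι hr).unit⁻¹ * ι (φ ⟨r, hrI⟩ : R), fun x => ?_⟩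
  apply cancelι hr
  rw [← mul_assoc, ← mul_assoc]
  nth_rewrite 1 [← (isUnitι hr).unit_spec]
  rw [Units.mul_inv, one_mul, ← map_mul, ← map_mul]
  exact congrArg (ι) ((mul_comm _ _).trans (key_comm I φ hrI x))

variable (hrI : r ∈ I) (hr : r ∈ R⁰)

noncomputable def EtoQ (φ : Module.End R I) : K := (espec_exists I hrI hr φ).choose

lemma espec_EtoQ (φ : Module.End R I) : Espec I φ (EtoQ I hrI hr φ) :=
  (espec_exists I hrI hr φ).choose_spec

lemma EtoQ_eq {φ : Module.End R I} {q : K} (h : Espec I φ q) : EtoQ I hrI hr φ = q :=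
  espec_unique I hrI hr (espec_EtoQ I hrI hr φ) h

lemma EtoQ_mem (φ : Module.End R I) : EtoQ I hrI hr φ ∈ idl I := by
  intro x hx
  exact ⟨(φ ⟨x, hx⟩ : R), (φ ⟨x, hx⟩).2, espec_EtoQ I hrI hr φ ⟨x, hx⟩⟩

noncomputable def EtoHom : Module.End R I →ₐ[R] idl I where
  toFun φ := ⟨EtoQ I hrI hr φ, EtoQ_mem I hrI hr φ⟩
  map_one' := Subtype.ext (by
    show EtoQ I hrI hr 1 = 1
    exact EtoQ_eq I hrI hr (fun x => by simp))
  map_mul' φ ψ := Subtype.ext (by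
    show EtoQ I hrI hr (φ * ψ) = EtoQ I hrI hr φ * EtoQ I hrI hr ψ
    exact EtoQ_eq I hrI hr (fun x => by
      rw [Module.End.mul_apply, mul_assoc, espec_EtoQ I hrI hr ψ x,
        espec_EtoQ I hrI hr φ (ψ x)]))
  map_zero' := Subtype.ext (by
    show EtoQ I hrI hr 0 = 0
    exact EtoQ_eq I hrI hr (fun x => by simp))
  map_add' φ ψ := Subtype.ext (by
    show EtoQ I hrI hr (φ + ψ) = EtoQ I hrI hr φ + EtoQ I hrI hr ψ
    exact EtoQ_eq I hrI hr (fun x => by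
      have h1 := espec_EtoQ I hrI hr φ x
      have h2 := espec_EtoQ I hrI hr ψ x
      simp only [LinearMap.add_apply, Submodule.coe_add, map_add, ← h1, ← h2]
      ring))
  commutes' a := Subtype.ext (by
    show EtoQ I hrI hr (algebraMap R (Module.End R I) a) = ι a
    exact EtoQ_eq I hrI hr (fun x => by
      rw [Module.algebraMap_end_apply]
      have h : ((a • x : I) : R) = a * (x : R) := by simp
      rw [h, map_mul]))

lemma EtoHom_injective : Function.Injective (EtoHom I hrI hr) := by
  intro φ ψ h
  have hq : EtoQ I hrI hr φ = EtoQ I hrI hr ψ := congrArg Subtype.val h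
  refine LinearMap.ext fun x => Subtype.ext (injι ?_)
  have h1 := espec_EtoQ I hrI hr φ x
  rw [hq, espec_EtoQ I hrI hr ψ x] at h1
  exact h1.symm

lemma EtoHom_surjective : Function.Surjective (EtoHom I hrI hr) := by
  rintro ⟨q, hq⟩
  have hy : ∀ x : I, ∃ y ∈ I, q * ι (x : R) = ι y := fun x => hq (x : R) x.2
  let g : I → I := fun x => ⟨(hy x).choose, (hy x).choose_spec.1⟩
  have hg : ∀ x : I, q * ι (x : R) = ι ((g x : I) : R) := fun x => (hy x).choose_spec.2
  let φ : Module.End R I :=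
    { toFun := g
      map_add' := by
        intro x y
        apply Subtype.ext; apply injι
        rw [← hg (x + y), Submodule.coe_add, Submodule.coe_add, map_add, map_add,
          ← hg x, ← hg y, mul_add]
      map_smul' := by
        intro c x
        apply Subtype.ext; apply injι
        have e1 : ((c • x : I) : R) = c * (x : R) := by simp
        have e2 : ((c • g x : I) : R) = c * ((g x : I) : R) := by simp
        rw [← hg (c • x), RingHom.id_apply, e1, e2, map_mul, map_mul, ← hg x]
        ring }
  exact ⟨φ, Subtype.ext (EtoQ_eq I hrI hr (fun x => hg x))⟩

noncomputable def endEquivIdl : Module.End R I ≃ₐ[R] idl I :=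
  AlgEquiv.ofBijective (EtoHom I hrI hr)
    ⟨EtoHom_injective I hrI hr, EtoHom_surjective I hrI hr⟩

end EndEquiv

section Dual

variable (M : Type v) [AddCommGroup M] [Module R M]

local notation "N" => Module.Dual R M

lemma mem_trace (f : N) (m : M) : f m ∈ traceIdeal R M :=
  (le_iSup (fun f : M →ₗ[R] R => LinearMap.range f) f) ⟨m, rfl⟩

lemma trace_le_trace_dual : traceIdeal R M ≤ traceIdeal R (Module.Dual R M) := by
  apply iSup_le
  rintro f x ⟨m, rfl⟩
  have := mem_trace (Module.Dual R M) (Module.Dual.eval R M m) f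
  rwa [Module.Dual.eval_apply] at this

/-- The scaling operator `h ↦ h m • g` on the dual module. -/
def eps (m : M) (g : N) : Module.End R N where
  toFun h := h m • g
  map_add' h h' := by simp [add_smul]
  map_smul' c h := by simp [mul_smul]

lemma central_swap {φ : Module.End R N} (hφ : φ ∈ Subalgebra.center R (Module.End R N))
    (f g : N) (m n : M) : (φ f) m * g n = f m * (φ g) n := by
  have h := Subalgebra.mem_center_iff.mp hφ (eps M m g)
  have h2 : (eps M m g) (φ f) = φ ((eps M m g) f) := by
    rw [← Module.End.mul_apply, ← Module.End.mul_apply, h]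
  simp only [eps, LinearMap.coe_mk, AddHom.coe_mk, map_smul] at h2
  have := congrArg (fun (z : N) => z n) h2
  simpa [mul_comm] using this

/-- The defining property of the fraction associated to a central endomorphism of the dual. -/
def Zspec (φ : Module.End R N) (q : K) : Prop :=
  ∀ (f : N) (m : M), q * ι (f m) = ι ((φ f) m)

lemma zspec_eq_on_trace {φ : Module.End R N} {q q' : K} (h1 : Zspec M φ q)
    (h2 : Zspec M φ q') {x : R} (hx : x ∈ traceIdeal R M) : q * ι x = q' * ι x := by
  refine Submodule.iSup_induction _ (motive := fun x => q * ι x = q' * ι x) hx ?_ (by simp) ?_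
  · rintro f x ⟨m, rfl⟩
    rw [h1 f m, h2 f m]
  · intro a b ha hb
    rw [map_add, mul_add, mul_add, ha, hb]

lemma zspec_unique {r : R} (hrI : r ∈ traceIdeal R M) (hr : r ∈ R⁰)
    {φ : Module.End R N} {q q' : K} (h1 : Zspec M φ q)
    (h2 : Zspec M φ q') : q = q' := by
  apply cancelι hr
  rw [mul_comm _ q, mul_comm _ q']
  exact zspec_eq_on_trace M h1 h2 hrI

lemma zspec_exists {r : R} (hrI : r ∈ traceIdeal R M) (hr : r ∈ R⁰)
    {φ : Module.End R N} (hφ : φ ∈ Subalgebra.center R (Module.End R N)) :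
    ∃ q : K, Zspec M φ q := by
  have hs : ∃ s : R, ∀ (g : N) (n : M), s * g n = r * (φ g) n := by
    refine Submodule.iSup_induction _
      (motive := fun x => ∃ s : R, ∀ (g : N) (n : M), s * g n = x * (φ g) n) hrI ?_
      ⟨0, by simp⟩ ?_
    · rintro f x ⟨m, rfl⟩
      exact ⟨(φ f) m, fun g n => central_swap M hφ f g m n⟩
    · rintro a b ⟨s, hs⟩ ⟨t, ht⟩
      exact ⟨s + t, fun g n => by rw [add_mul, add_mul, hs, ht]⟩
  obtain ⟨s, hs⟩ := hs
  refine ⟨↑(isUnitι hr).unit⁻¹ * ι s, fun g n => ?_⟩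
  apply cancelι hr
  rw [← mul_assoc, ← mul_assoc]
  nth_rewrite 1 [← (isUnitι hr).unit_spec]
  rw [Units.mul_inv, one_mul, ← map_mul, ← map_mul]
  exact congrArg (ι) (hs g n)

lemma zspec_mem {φ : Module.End R N} {q : K} (h : Zspec M φ q) :
    q ∈ idl (traceIdeal R M) := by
  intro x hx
  refine Submodule.iSup_induction _
    (motive := fun x => ∃ y ∈ traceIdeal R M, q * ι x = ι y) hx ?_
    ⟨0, zero_mem _, by simp⟩ ?_
  · rintro f x ⟨m, rfl⟩
    exact ⟨(φ f) m, mem_trace M _ m, h f m⟩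
  · rintro a b ⟨y, hy, ey⟩ ⟨z, hz, ez⟩
    exact ⟨y + z, add_mem hy hz, by rw [map_add, mul_add, ey, ez, map_add]⟩

variable {r : R}

noncomputable def ZtoQ (hrI : r ∈ traceIdeal R M) (hr : r ∈ R⁰)
    (φ : Subalgebra.center R (Module.End R N)) : K :=
  (zspec_exists M hrI hr φ.2).choose

lemma zspec_ZtoQ (hrI : r ∈ traceIdeal R M) (hr : r ∈ R⁰)
    (φ : Subalgebra.center R (Module.End R N)) :
    Zspec M (φ : Module.End R N) (ZtoQ M hrI hr φ) :=
  (zspec_exists M hrI hr φ.2).choose_spec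

lemma ZtoQ_eq (hrI : r ∈ traceIdeal R M) (hr : r ∈ R⁰)
    {φ : Subalgebra.center R (Module.End R N)} {q : K}
    (h : Zspec M (φ : Module.End R N) q) : ZtoQ M hrI hr φ = q :=
  zspec_unique M hrI hr (zspec_ZtoQ M hrI hr φ) h

noncomputable def ZtoHom (hrI : r ∈ traceIdeal R M) (hr : r ∈ R⁰) :
    Subalgebra.center R (Module.End R N) →ₐ[R] idl (traceIdeal R M) where
  toFun φ := ⟨ZtoQ M hrI hr φ, zspec_mem M (zspec_ZtoQ M hrI hr φ)⟩
  map_one' := Subtype.ext (by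
    show ZtoQ M hrI hr 1 = 1
    refine ZtoQ_eq M hrI hr (fun f m => ?_)
    have hcoe : ((1 : Subalgebra.center R (Module.End R N)) : Module.End R N) = 1 := rfl
    rw [hcoe, Module.End.one_apply, one_mul])
  map_mul' φ ψ := Subtype.ext (by
    show ZtoQ M hrI hr (φ * ψ) = ZtoQ M hrI hr φ * ZtoQ M hrI hr ψ
    refine ZtoQ_eq M hrI hr (fun f m => ?_)
    have hcoe : ((φ * ψ : Subalgebra.center R (Module.End R N)) : Module.End R N)
        = (φ : Module.End R N) * (ψ : Module.End R N) := rfl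
    rw [hcoe, Module.End.mul_apply, mul_assoc, zspec_ZtoQ M hrI hr ψ f m,
      zspec_ZtoQ M hrI hr φ ((ψ : Module.End R N) f) m])
  map_zero' := Subtype.ext (by
    show ZtoQ M hrI hr 0 = 0
    refine ZtoQ_eq M hrI hr (fun f m => ?_)
    have hcoe : ((0 : Subalgebra.center R (Module.End R N)) : Module.End R N) = 0 := rfl
    rw [hcoe, LinearMap.zero_apply, zero_mul]
    simp)
  map_add' φ ψ := Subtype.ext (by
    show ZtoQ M hrI hr (φ + ψ) = ZtoQ M hrI hr φ + ZtoQ M hrI hr ψ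
    refine ZtoQ_eq M hrI hr (fun f m => ?_)
    have h1 := zspec_ZtoQ M hrI hr φ f m
    have h2 := zspec_ZtoQ M hrI hr ψ f m
    have hcoe : ((φ + ψ : Subalgebra.center R (Module.End R N)) : Module.End R N)
        = (φ : Module.End R N) + (ψ : Module.End R N) := rfl
    rw [hcoe, LinearMap.add_apply, LinearMap.add_apply, map_add, ← h1, ← h2, add_mul])
  commutes' a := Subtype.ext (by
    show ZtoQ M hrI hr (algebraMap R _ a) = ι a
    refine ZtoQ_eq M hrI hr (fun f m => ?_)
    have hcoe : ((algebraMap R (Subalgebra.center R (Module.End R N)) a :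
        Subalgebra.center R (Module.End R N)) : Module.End R N)
        = algebraMap R (Module.End R N) a := rfl
    rw [hcoe, Module.algebraMap_end_apply, LinearMap.smul_apply, smul_eq_mul, map_mul])

lemma ZtoHom_injective (hrI : r ∈ traceIdeal R M) (hr : r ∈ R⁰) :
    Function.Injective (ZtoHom M hrI hr) := by
  intro φ ψ h
  have hq : ZtoQ M hrI hr φ = ZtoQ M hrI hr ψ := congrArg Subtype.val h
  refine Subtype.ext (LinearMap.ext fun f => LinearMap.ext fun m => injι ?_)
  have h1 := zspec_ZtoQ M hrI hr φ f m
  rw [hq, zspec_ZtoQ M hrI hr ψ f m] at h1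
  exact h1.symm

/-- Choice of the numerator for `q * x`. -/
noncomputable def qy {I : Ideal R} {q : K} (hq : q ∈ idl I) {x : R} (hx : x ∈ I) : R :=
  (hq x hx).choose

lemma qy_mem {I : Ideal R} {q : K} (hq : q ∈ idl I) {x : R} (hx : x ∈ I) :
    qy hq hx ∈ I := (hq x hx).choose_spec.1

lemma qy_spec {I : Ideal R} {q : K} (hq : q ∈ idl I) {x : R} (hx : x ∈ I) :
    ι (qy hq hx) = q * ι x := ((hq x hx).choose_spec.2).symm

lemma qy_add {I : Ideal R} {q : K} (hq : q ∈ idl I) {x y : R} (hx : x ∈ I) (hy : y ∈ I)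
    (hxy : x + y ∈ I) : qy hq hxy = qy hq hx + qy hq hy := by
  apply injι
  rw [qy_spec hq hxy, map_add (algebraMap R K) x y,
    map_add (algebraMap R K) (qy hq hx) (qy hq hy), qy_spec hq hx, qy_spec hq hy, mul_add]

lemma qy_smul {I : Ideal R} {q : K} (hq : q ∈ idl I) (c : R) {x : R} (hx : x ∈ I)
    (hcx : c * x ∈ I) : qy hq hcx = c * qy hq hx := by
  apply injι
  rw [qy_spec hq hcx, map_mul, map_mul, qy_spec hq hx]
  ring

/-- Given `q` in the idealizer, "multiplication by `q`" of a functional. -/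
noncomputable def qmul {q : K} (hq : q ∈ idl (traceIdeal R M)) (f : N) : N where
  toFun m := qy hq (mem_trace M f m)
  map_add' m m' := by
    simp only [map_add]
    exact qy_add hq (mem_trace M f m) (mem_trace M f m') _
  map_smul' c m := by
    simp only [map_smul, smul_eq_mul, RingHom.id_apply]
    exact qy_smul hq c (mem_trace M f m) _

lemma qmul_spec {q : K} (hq : q ∈ idl (traceIdeal R M)) (f : N) (m : M) :
    ι ((qmul M hq f) m) = q * ι (f m) :=
  qy_spec hq (mem_trace M f m)

lemma qmul_mem {q : K} (hq : q ∈ idl (traceIdeal R M)) (f : N) (m : M) :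
    (qmul M hq f) m ∈ traceIdeal R M :=
  qy_mem hq (mem_trace M f m)

lemma smul_qmul {q : K} (hq : q ∈ idl (traceIdeal R M)) {w : R}
    (hw : q * ι r = ι w) (f : N) : r • qmul M hq f = w • f := by
  refine LinearMap.ext fun m => injι ?_
  have e1 : (r • qmul M hq f) m = r * (qmul M hq f) m := by simp
  have e2 : (w • f) m = w * f m := by simp
  rw [e1, e2, map_mul, map_mul, qmul_spec M hq f m, ← hw]
  ring

lemma ZtoHom_surjective (hrI : r ∈ traceIdeal R M) (hr : r ∈ R⁰) :
    Function.Surjective (ZtoHom M hrI hr) := by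
  rintro ⟨q, hq⟩
  obtain ⟨w, hwI, hw⟩ := hq r hrI
  let φ : Module.End R N :=
    { toFun := qmul M hq
      map_add' := fun f f' => LinearMap.ext fun m => injι (by
        simp only [LinearMap.add_apply, map_add, qmul_spec]
        ring)
      map_smul' := fun c f => LinearMap.ext fun m => injι (by
        simp only [RingHom.id_apply, LinearMap.smul_apply, smul_eq_mul, map_mul, qmul_spec]
        ring) }
  have hφg : ∀ g : N, φ g = qmul M hq g := fun g => rfl
  have hφc : φ ∈ Subalgebra.center R (Module.End R N) := by
    refine Subalgebra.mem_center_iff.mpr fun ψ => ?_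
    refine LinearMap.ext fun f => ?_
    rw [Module.End.mul_apply, Module.End.mul_apply, hφg, hφg]
    refine LinearMap.ext fun m => ?_
    rw [← mul_cancel_left_mem_nonZeroDivisors hr]
    have h1 : r * (ψ (qmul M hq f)) m = (ψ (r • qmul M hq f)) m := by
      rw [map_smul]; simp
    have h2 : r * (qmul M hq (ψ f)) m = (r • qmul M hq (ψ f)) m := by simp
    rw [h1, h2, smul_qmul M hq hw, smul_qmul M hq hw, map_smul]
  refine ⟨⟨φ, hφc⟩, Subtype.ext ?_⟩
  show ZtoQ M hrI hr ⟨φ, hφc⟩ = q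
  exact ZtoQ_eq M hrI hr (fun f m => ((hφg f ▸ qmul_spec M hq f m) : _).symm)

noncomputable def zendEquivIdl (hrI : r ∈ traceIdeal R M) (hr : r ∈ R⁰) :
    Subalgebra.center R (Module.End R N) ≃ₐ[R] idl (traceIdeal R M) :=
  AlgEquiv.ofBijective (ZtoHom M hrI hr)
    ⟨ZtoHom_injective M hrI hr, ZtoHom_surjective M hrI hr⟩

/-- Lift "multiplication by `q`" through any ideal containing the values of `f`. -/
noncomputable def qlift {I : Ideal R} {q : K} (hq : q ∈ idl I) (f : N)
    (hf : ∀ m, f m ∈ I) : N where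
  toFun m := qy hq (hf m)
  map_add' m m' := by
    simp only [map_add]
    exact qy_add hq (hf m) (hf m') _
  map_smul' c m := by
    simp only [map_smul, smul_eq_mul, RingHom.id_apply]
    exact qy_smul hq c (hf m) _

lemma qlift_spec {I : Ideal R} {q : K} (hq : q ∈ idl I) (f : N)
    (hf : ∀ m, f m ∈ I) (m : M) : ι ((qlift M hq f hf) m) = q * ι (f m) :=
  qy_spec hq (hf m)

lemma idl_dual_le :
    idl (traceIdeal R (Module.Dual R M)) ≤ idl (traceIdeal R M) := by
  intro q hq x hx
  refine Submodule.iSup_induction _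
    (motive := fun x => ∃ y ∈ traceIdeal R M, q * ι x = ι y) hx ?_
    ⟨0, zero_mem _, by simp⟩ ?_
  · rintro f x ⟨m, rfl⟩
    refine ⟨(qlift M hq f (fun m' => trace_le_trace_dual M (mem_trace M f m'))) m,
      mem_trace M _ m, (qlift_spec M hq f _ m).symm⟩
  · rintro a b ⟨y, hy, ey⟩ ⟨z, hz, ez⟩
    exact ⟨y + z, add_mem hy hz, by rw [map_add, mul_add, ey, ez, map_add]⟩

lemma idl_le_idl_dual {r : R} (hrI : r ∈ traceIdeal R M) (hr : r ∈ R⁰) :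
    idl (traceIdeal R M) ≤ idl (traceIdeal R (Module.Dual R M)) := by
  intro q hq
  obtain ⟨w, hwI, hw⟩ := hq r hrI
  intro x hx
  refine Submodule.iSup_induction _
    (motive := fun x => ∃ y ∈ traceIdeal R (Module.Dual R M), q * ι x = ι y) hx ?_
    ⟨0, zero_mem _, by simp⟩ ?_
  · rintro g x ⟨f, rfl⟩
    set f' : N := qlift M hq f (fun m => mem_trace M f m) with hf'
    have hclaim : w • f = r • f' := by
      refine LinearMap.ext fun m => ?_
      have e1 : (w • f) m = w * f m := by simp
      have e2 : (r • f') m = r * f' m := by simp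
      apply injι
      rw [e1, e2, map_mul, map_mul, qlift_spec M hq f _ m, ← hw]
      ring
    refine ⟨g f', mem_trace (Module.Dual R M) g f', ?_⟩
    apply cancelι hr
    have h1 : ι r * (q * ι (g f)) = ι w * ι (g f) := by rw [← hw]; ring
    rw [h1, ← map_mul, ← map_mul]
    congr 1
    have h2 : w * g f = g (w • f) := by rw [map_smul]; simp
    have h3 : g (r • f') = r * g f' := by rw [map_smul]; simp
    rw [h2, hclaim, h3]
  · rintro a b ⟨y, hy, ey⟩ ⟨z, hz, ez⟩
    exact ⟨y + z, add_mem hy hz, by rw [map_add, mul_add, ey, ez, map_add]⟩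

end Dual

end TraceAux

theorem trace_end_isos (R : Type u) (M : Type v) [CommRing R] [IsNoetherianRing R]
    [AddCommGroup M] [Module R M] [Module.Finite R M]
    (hreg : ∃ r ∈ traceIdeal R M, r ∈ nonZeroDivisors R) :
    Nonempty (Module.End R (traceIdeal R (Module.Dual R M)) ≃ₐ[R]
      Module.End R (traceIdeal R M)) ∧
    Nonempty (Module.End R (traceIdeal R M) ≃ₐ[R]
      Subalgebra.center R (Module.End R (Module.Dual R M))) := by
  obtain ⟨r, hrI, hr⟩ := hreg
  have hrJ : r ∈ traceIdeal R (Module.Dual R M) := TraceAux.trace_le_trace_dual M hrI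
  have heq : TraceAux.idl (traceIdeal R (Module.Dual R M)) = TraceAux.idl (traceIdeal R M) :=
    le_antisymm (TraceAux.idl_dual_le M) (TraceAux.idl_le_idl_dual M hrI hr)
  have e1 := TraceAux.endEquivIdl (traceIdeal R (Module.Dual R M)) hrJ hr
  have e2 := TraceAux.endEquivIdl (traceIdeal R M) hrI hr
  have e3 := TraceAux.zendEquivIdl M hrI hr
  exact ⟨⟨e1.trans ((Subalgebra.equivOfEq _ _ heq).trans e2.symm)⟩,
    ⟨e2.trans e3.symm⟩⟩
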